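/- arXiv:math/0003151 — 2 statements merged into one kernel-verified Lean document; each statement's English description precedes it below -/
import Mathlib

section
/- If a Banach space X contains a sequence spanning ℓ¹ asymptotically isometrically, then X fails the fixed point property for contractive maps. -/
open NormedSpace Filter Topology

namespace NormedSpace
abbrev Dual (𝕜 : Type*) [NontriviallyNormedField 𝕜] (E : Type*) [SeminormedAddCommGroup E]
    [NormedSpace 𝕜 E] : Type _ := E →L[𝕜] 𝕜
end NormedSpace

/-- A sequence spans `ℓ¹` asymptotically isometrically. -/
def SpansL1Asymptotically {X : Type*} [NormedAddCommGroup X] [NormedSpace ℝ X]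
    (x : ℕ → X) : Prop :=
  ∃ δ : ℕ → ℝ, (∀ n, 0 ≤ δ n ∧ δ n < 1) ∧ Tendsto δ atTop (nhds 0) ∧
    ∀ (N : ℕ) (α : ℕ → ℝ),
      (∑ n ∈ Finset.range N, (1 - δ n) * |α n|) ≤ ‖∑ n ∈ Finset.range N, α n • x n‖ ∧
      ‖∑ n ∈ Finset.range N, α n • x n‖ ≤ ∑ n ∈ Finset.range N, |α n|

/-- A sequence spans `ℓ¹` almost isometrically. -/
def SpansL1AlmostIsometrically {X : Type*} [NormedAddCommGroup X] [NormedSpace ℝ X]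
    (x : ℕ → X) : Prop :=
  ∃ δ : ℕ → ℝ, (∀ n, 0 ≤ δ n ∧ δ n < 1) ∧ Tendsto δ atTop (nhds 0) ∧
    ∀ (m M : ℕ) (α : ℕ → ℝ),
      (1 - δ m) * (∑ n ∈ Finset.Icc m M, |α n|) ≤ ‖∑ n ∈ Finset.Icc m M, α n • x n‖ ∧
      ‖∑ n ∈ Finset.Icc m M, α n • x n‖ ≤ ∑ n ∈ Finset.Icc m M, |α n|

/-- A sequence spans `c₀` asymptotically isometrically. -/
def SpansC0Asymptotically {X : Type*} [NormedAddCommGroup X] [NormedSpace ℝ X]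
    (z : ℕ → X) : Prop :=
  ∃ δ : ℕ → ℝ, (∀ n, 0 ≤ δ n ∧ δ n < 1) ∧ Tendsto δ atTop (nhds 0) ∧
    ∀ (N : ℕ) (hN : N ≠ 0) (α : ℕ → ℝ),
      ((Finset.range N).sup' (Finset.nonempty_range_iff.mpr hN)
          (fun n => (1 - δ n) * |α n|)) ≤ ‖∑ n ∈ Finset.range N, α n • z n‖ ∧
      ‖∑ n ∈ Finset.range N, α n • z n‖ ≤
        (Finset.range N).sup' (Finset.nonempty_range_iff.mpr hN)
          (fun n => (1 + δ n) * |α n|)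

/-- `P` is an L-projection: an idempotent bounded operator with
`‖ξ‖ = ‖Pξ‖ + ‖ξ - Pξ‖` for all `ξ`. -/
def IsLProjection {E : Type*} [NormedAddCommGroup E] [NormedSpace ℝ E]
    (P : E →L[ℝ] E) : Prop :=
  (∀ ξ, P (P ξ) = P ξ) ∧ ∀ ξ, ‖ξ‖ = ‖P ξ‖ + ‖ξ - P ξ‖

/-- `X` is L-embedded: the canonical image of `X` in its bidual is the range of an
L-projection. -/
def IsLEmbedded (X : Type*) [NormedAddCommGroup X] [NormedSpace ℝ X] : Prop :=
  ∃ P : Dual ℝ (Dual ℝ X) →L[ℝ] Dual ℝ (Dual ℝ X),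
    (∀ ξ, P (P ξ) = P ξ) ∧ (∀ ξ, ‖ξ‖ = ‖P ξ‖ + ‖ξ - P ξ‖) ∧
      Set.range P = Set.range (inclusionInDoubleDual ℝ X)

/-- `X` is M-embedded: the annihilator of `X` in `X'''` is the range of an
L-projection on `X'''`. -/
def IsMEmbedded (X : Type*) [NormedAddCommGroup X] [NormedSpace ℝ X] : Prop :=
  ∃ P : Dual ℝ (Dual ℝ (Dual ℝ X)) →L[ℝ] Dual ℝ (Dual ℝ (Dual ℝ X)),
    (∀ φ, P (P φ) = P φ) ∧ (∀ φ, ‖φ‖ = ‖P φ‖ + ‖φ - P φ‖) ∧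
      Set.range P = {φ | ∀ x : X, φ (inclusionInDoubleDual ℝ X x) = 0}

/-- `X` fails the fixed point property: there are a nonempty closed bounded convex set and
a contractive self-map without fixed point. -/
def FailsFPP (X : Type*) [NormedAddCommGroup X] [NormedSpace ℝ X] : Prop :=
  ∃ C : Set X, C.Nonempty ∧ IsClosed C ∧ Bornology.IsBounded C ∧ Convex ℝ C ∧
    ∃ f : X → X, Set.MapsTo f C C ∧
      (∀ x ∈ C, ∀ y ∈ C, x ≠ y → ‖f x - f y‖ < ‖x - y‖) ∧
      ∀ x ∈ C, f x ≠ x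

section AuxFPP

open Filter Topology

/-- Shift a sequence one step to the right, inserting `0` in position `0`. -/
private def shiftSeq (t : ℕ → ℝ) : ℕ → ℝ := fun k => Nat.casesOn k 0 t

private lemma shiftSeq_zero (t : ℕ → ℝ) : shiftSeq t 0 = 0 := rfl
private lemma shiftSeq_succ (t : ℕ → ℝ) (k : ℕ) : shiftSeq t (k + 1) = t k := rfl

/-- The abstract Dowling–Lennard construction: if `v : ℕ → X` satisfies suitable upper and
lower `ℓ¹`-estimates with weights `B` (upper) and `c` (lower) such that `B (k+1) < c k`,
then `X` fails the fixed point property. -/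
private lemma failsFPP_of_estimates {X : Type*} [NormedAddCommGroup X] [NormedSpace ℝ X]
    [CompleteSpace X] (v : ℕ → X) (c B : ℕ → ℝ)
    (hc1 : ∀ k, 1 ≤ c k) (hc2 : ∀ k, c k ≤ 2)
    (hB0 : ∀ k, 0 ≤ B k) (hB2 : ∀ k, B k ≤ 2)
    (hBc : ∀ k, B (k + 1) < c k)
    (hnorm : ∀ k, ‖v k‖ ≤ B k)
    (hlow : ∀ (K : ℕ) (β : ℕ → ℝ),
      ∑ k ∈ Finset.range K, c k * |β k| ≤ ‖∑ k ∈ Finset.range K, β k • v k‖) :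
    FailsFPP X := by
  classical
  -- summability of the vector series
  have hvsum : ∀ {t : ℕ → ℝ}, Summable t → Summable (fun k => t k • v k) := by
    intro t ht
    refine Summable.of_norm_bounded (ht.abs.mul_left 2) (fun k => ?_)
    rw [norm_smul, Real.norm_eq_abs]
    calc |t k| * ‖v k‖ ≤ |t k| * 2 :=
          mul_le_mul_of_nonneg_left ((hnorm k).trans (hB2 k)) (abs_nonneg _)
      _ = 2 * |t k| := mul_comm _ _
  have hsumc : ∀ {β : ℕ → ℝ}, Summable β → Summable (fun k => c k * |β k|) := by
    intro β hβ
    refine Summable.of_nonneg_of_le (fun k => mul_nonneg (by linarith [hc1 k]) (abs_nonneg _))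
      (fun k => mul_le_mul_of_nonneg_right (hc2 k) (abs_nonneg _)) (hβ.abs.mul_left 2)
  have hsumB : ∀ {β : ℕ → ℝ}, Summable β → Summable (fun k => B (k + 1) * |β k|) := by
    intro β hβ
    refine Summable.of_nonneg_of_le (fun k => mul_nonneg (hB0 _) (abs_nonneg _))
      (fun k => mul_le_mul_of_nonneg_right (hB2 _) (abs_nonneg _)) (hβ.abs.mul_left 2)
  -- linearity of the sum
  have hTsub : ∀ (t s : ℕ → ℝ), Summable t → Summable s →
      (∑' k, t k • v k) - (∑' k, s k • v k) = ∑' k, (t k - s k) • v k := by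
    intro t s ht hs
    rw [← Summable.tsum_sub (hvsum ht) (hvsum hs)]
    exact tsum_congr fun k => (sub_smul _ _ _).symm
  -- infinite lower estimate
  have hlow' : ∀ (β : ℕ → ℝ), Summable β →
      ∑' k, c k * |β k| ≤ ‖∑' k, β k • v k‖ := by
    intro β hβ
    have h2 : Tendsto (fun K => ∑ k ∈ Finset.range K, c k * |β k|) atTop
        (𝓝 (∑' k, c k * |β k|)) := (hsumc hβ).hasSum.tendsto_sum_nat
    have h3 : Tendsto (fun K => ‖∑ k ∈ Finset.range K, β k • v k‖) atTop
        (𝓝 ‖∑' k, β k • v k‖) := ((hvsum hβ).hasSum.tendsto_sum_nat).norm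
    exact le_of_tendsto_of_tendsto' h2 h3 (fun K => hlow K β)
  have habs_le : ∀ (β : ℕ → ℝ), Summable β →
      ∑' k, |β k| ≤ ‖∑' k, β k • v k‖ := by
    intro β hβ
    refine le_trans (Summable.tsum_le_tsum (fun k => ?_) hβ.abs (hsumc hβ)) (hlow' β hβ)
    nlinarith [hc1 k, abs_nonneg (β k)]
  -- infinite upper estimates
  have hup0 : ∀ (β : ℕ → ℝ), Summable β →
      ‖∑' k, β k • v k‖ ≤ 2 * ∑' k, |β k| := by
    intro β hβ
    have hterm : ∀ k, ‖β k • v k‖ ≤ 2 * |β k| := fun k => by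
      rw [norm_smul, Real.norm_eq_abs]
      calc |β k| * ‖v k‖ ≤ |β k| * 2 :=
            mul_le_mul_of_nonneg_left ((hnorm k).trans (hB2 k)) (abs_nonneg _)
        _ = 2 * |β k| := mul_comm _ _
    have hs' : Summable (fun k => ‖β k • v k‖) :=
      Summable.of_nonneg_of_le (fun _ => norm_nonneg _) hterm (hβ.abs.mul_left 2)
    calc ‖∑' k, β k • v k‖ ≤ ∑' k, ‖β k • v k‖ := norm_tsum_le_tsum_norm hs'
      _ ≤ ∑' k, 2 * |β k| := Summable.tsum_le_tsum hterm hs' (hβ.abs.mul_left 2)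
      _ = 2 * ∑' k, |β k| := tsum_mul_left
  have hup1 : ∀ (β : ℕ → ℝ), Summable β →
      ‖∑' k, β k • v (k + 1)‖ ≤ ∑' k, B (k + 1) * |β k| := by
    intro β hβ
    have hterm : ∀ k, ‖β k • v (k + 1)‖ ≤ B (k + 1) * |β k| := fun k => by
      rw [norm_smul, Real.norm_eq_abs]
      calc |β k| * ‖v (k + 1)‖ ≤ |β k| * B (k + 1) :=
            mul_le_mul_of_nonneg_left (hnorm _) (abs_nonneg _)
        _ = B (k + 1) * |β k| := mul_comm _ _
    have hs' : Summable (fun k => ‖β k • v (k + 1)‖) :=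
      Summable.of_nonneg_of_le (fun _ => norm_nonneg _) hterm (hsumB hβ)
    exact (norm_tsum_le_tsum_norm hs').trans (Summable.tsum_le_tsum hterm hs' (hsumB hβ))
  -- uniqueness of coefficients
  have huniq : ∀ (t s : ℕ → ℝ), Summable t → Summable s →
      (∑' k, t k • v k) = (∑' k, s k • v k) → t = s := by
    intro t s ht hs heq
    funext k
    have hΔ : Summable (fun k => t k - s k) := ht.sub hs
    have h1 := habs_le _ hΔ
    rw [← hTsub t s ht hs, heq, sub_self, norm_zero] at h1
    have h2 : |t k - s k| ≤ 0 :=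
      le_trans (Summable.le_tsum hΔ.abs k (fun j _ => abs_nonneg _)) h1
    have h3 : |t k - s k| = 0 := le_antisymm h2 (abs_nonneg _)
    exact sub_eq_zero.mp (abs_eq_zero.mp h3)
  -- shift facts
  have hshift_summable : ∀ {t : ℕ → ℝ}, Summable t → Summable (shiftSeq t) := by
    intro t ht
    have h1 : Summable (fun n => shiftSeq t (n + 1)) := ht
    exact (summable_nat_add_iff 1).mp h1
  have hshift_hasSum : ∀ {t : ℕ → ℝ} {a : ℝ}, HasSum t a → HasSum (shiftSeq t) a := by
    intro t a ht
    have h1 : HasSum (fun n => shiftSeq t (n + 1)) a := ht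
    have h2 := (hasSum_nat_add_iff (f := shiftSeq t) 1).mp h1
    simpa [shiftSeq_zero] using h2
  have hTshift : ∀ (t : ℕ → ℝ), Summable t →
      (∑' k, shiftSeq t k • v k) = ∑' k, t k • v (k + 1) := by
    intro t ht
    rw [Summable.tsum_eq_zero_add (hvsum (hshift_summable ht))]
    simp only [shiftSeq_zero, shiftSeq_succ, zero_smul, zero_add]
  -- the strict contraction estimate
  have hcontr : ∀ (t s : ℕ → ℝ), Summable t → Summable s → t ≠ s →
      ‖(∑' k, shiftSeq t k • v k) - (∑' k, shiftSeq s k • v k)‖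
        < ‖(∑' k, t k • v k) - (∑' k, s k • v k)‖ := by
    intro t s ht hs hne
    have hΔ : Summable (fun k => t k - s k) := ht.sub hs
    obtain ⟨k0, hk0⟩ : ∃ k, t k - s k ≠ 0 := by
      by_contra hc
      push_neg at hc
      exact hne (funext fun k => sub_eq_zero.mp (hc k))
    have e1 : (∑' k, shiftSeq t k • v k) - (∑' k, shiftSeq s k • v k)
        = ∑' k, (t k - s k) • v (k + 1) := by
      rw [hTsub _ _ (hshift_summable ht) (hshift_summable hs)]
      have heq : (fun k => (shiftSeq t k - shiftSeq s k) • v k)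
          = fun k => shiftSeq (fun k => t k - s k) k • v k := by
        funext k
        cases k with
        | zero => simp [shiftSeq_zero]
        | succ k => simp [shiftSeq_succ]
      rw [heq, hTshift _ hΔ]
    rw [e1, hTsub t s ht hs]
    have e2 : ‖∑' k, (t k - s k) • v (k + 1)‖ ≤ ∑' k, B (k + 1) * |t k - s k| := hup1 _ hΔ
    have e3 : ∑' k, B (k + 1) * |t k - s k| < ∑' k, c k * |t k - s k| := by
      refine Summable.tsum_lt_tsum_of_nonneg (fun k => mul_nonneg (hB0 _) (abs_nonneg _))
        (fun k => mul_le_mul_of_nonneg_right (hBc k).le (abs_nonneg _))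
        (mul_lt_mul_of_pos_right (hBc k0) (abs_pos.mpr hk0)) (hsumc hΔ)
    have e4 := hlow' _ hΔ
    linarith
  -- The set and the map
  set S : Set (ℕ → ℝ) := {t | (∀ k, 0 ≤ t k) ∧ HasSum t 1} with hS
  set T : (ℕ → ℝ) → X := fun t => ∑' k, t k • v k with hT
  set C : Set X := T '' S with hC
  set f : X → X := fun u => if h : ∃ t ∈ S, T t = u then T (shiftSeq h.choose) else u with hf
  have hmemC : ∀ u, u ∈ C ↔ ∃ t ∈ S, T t = u := fun u => Set.mem_image _ _ _
  have hfval : ∀ t ∈ S, f (T t) = T (shiftSeq t) := by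
    intro t htS
    have hex : ∃ s ∈ S, T s = T t := ⟨t, htS, rfl⟩
    have h1 : f (T t) = T (shiftSeq hex.choose) := dif_pos hex
    obtain ⟨hmem, heq⟩ := hex.choose_spec
    rw [h1, huniq hex.choose t hmem.2.summable htS.2.summable heq]
  have hshiftS : ∀ t ∈ S, shiftSeq t ∈ S := by
    rintro t ⟨ht0, ht1⟩
    refine ⟨fun k => ?_, hshift_hasSum ht1⟩
    cases k with
    | zero => exact le_refl 0
    | succ k => exact ht0 k
  -- assemble
  refine ⟨C, ?_, ?_, ?_, ?_, f, ?_, ?_, ?_⟩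
  · -- nonempty
    refine ⟨T (fun k => if k = 0 then 1 else 0), Set.mem_image_of_mem _ ⟨?_, ?_⟩⟩
    · intro k
      by_cases hk : k = 0 <;> simp [hk]
    · exact hasSum_ite_eq 0 1
  · -- closed
    apply IsSeqClosed.isClosed
    intro useq u hmem hlim
    have hmem' : ∀ m, ∃ t ∈ S, T t = useq m := fun m => (hmemC _).mp (hmem m)
    choose t htS hTt using hmem'
    have htsum : ∀ m, Summable (t m) := fun m => (htS m).2.summable
    have hl1pair : ∀ m j, ∑' k, |t m k - t j k| ≤ ‖useq m - useq j‖ := by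
      intro m j
      have hΔ : Summable (fun k => t m k - t j k) := (htsum m).sub (htsum j)
      have h1 := habs_le _ hΔ
      rw [← hTsub _ _ (htsum m) (htsum j)] at h1
      rw [← hTt m, ← hTt j]
      exact h1
    have hcauchy : CauchySeq useq := hlim.cauchySeq
    have hcoord : ∀ k, ∃ L : ℝ, Tendsto (fun m => t m k) atTop (𝓝 L) := by
      intro k
      apply cauchySeq_tendsto_of_complete
      rw [Metric.cauchySeq_iff]
      intro ε hε
      obtain ⟨N, hN⟩ := Metric.cauchySeq_iff.mp hcauchy ε hε
      refine ⟨N, fun m hm j hj => lt_of_le_of_lt ?_ (hN m hm j hj)⟩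
      rw [Real.dist_eq, dist_eq_norm]
      calc |t m k - t j k| ≤ ∑' k, |t m k - t j k| :=
            Summable.le_tsum ((htsum m).sub (htsum j)).abs k (fun _ _ => abs_nonneg _)
        _ ≤ ‖useq m - useq j‖ := hl1pair m j
    choose τ hτ using hcoord
    have hl1 : ∀ ε : ℝ, 0 < ε → ∃ M, ∀ m ≥ M, ∀ K,
        ∑ k ∈ Finset.range K, |t m k - τ k| ≤ ε := by
      intro ε hε
      obtain ⟨M, hM⟩ := Metric.cauchySeq_iff.mp hcauchy ε hε
      refine ⟨M, fun m hm K => ?_⟩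
      have hjlim : Tendsto (fun j => ∑ k ∈ Finset.range K, |t m k - t j k|) atTop
          (𝓝 (∑ k ∈ Finset.range K, |t m k - τ k|)) := by
        apply tendsto_finset_sum
        intro k _
        exact (tendsto_const_nhds.sub (hτ k)).abs
      refine le_of_tendsto hjlim ?_
      filter_upwards [eventually_ge_atTop M] with j hj
      calc ∑ k ∈ Finset.range K, |t m k - t j k| ≤ ∑' k, |t m k - t j k| :=
            Summable.sum_le_tsum _ (fun _ _ => abs_nonneg _) ((htsum m).sub (htsum j)).abs
        _ ≤ ‖useq m - useq j‖ := hl1pair m j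
        _ = dist (useq m) (useq j) := (dist_eq_norm _ _).symm
        _ ≤ ε := (hM m hm j hj).le
    have hl1' : ∀ ε : ℝ, 0 < ε → ∃ M, ∀ m ≥ M,
        Summable (fun k => |t m k - τ k|) ∧ ∑' k, |t m k - τ k| ≤ ε := by
      intro ε hε
      obtain ⟨M, hM⟩ := hl1 ε hε
      exact ⟨M, fun m hm =>
        ⟨summable_of_sum_range_le (fun _ => abs_nonneg _) (hM m hm),
          Real.tsum_le_of_sum_range_le (fun _ => abs_nonneg _) (hM m hm)⟩⟩
    have hτ0 : ∀ k, 0 ≤ τ k :=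
      fun k => ge_of_tendsto (hτ k) (Eventually.of_forall fun m => (htS m).1 k)
    obtain ⟨M1, hM1⟩ := hl1' 1 one_pos
    have hτsum : Summable τ := by
      have h1 := (hM1 M1 le_rfl).1
      have h2 : Summable (fun k => τ k - t M1 k) := by
        have h3 : Summable (fun k => |τ k - t M1 k|) := by
          simpa [abs_sub_comm] using h1
        exact h3.of_abs
      have h4 : τ = fun k => t M1 k + (τ k - t M1 k) := by funext k; ring
      rw [h4]
      exact (htsum M1).add h2
    have hτts : ∑' k, τ k = 1 := by
      have key : ∀ ε : ℝ, 0 < ε → |(∑' k, τ k) - 1| ≤ ε := by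
        intro ε hε
        obtain ⟨M, hM⟩ := hl1' ε hε
        obtain ⟨hsm, hle⟩ := hM M le_rfl
        have hsm' : Summable (fun k => |τ k - t M k|) := by simpa [abs_sub_comm] using hsm
        have h1 : (∑' k, τ k) - 1 = ∑' k, (τ k - t M k) := by
          rw [← (htS M).2.tsum_eq, ← Summable.tsum_sub hτsum (htsum M)]
        rw [h1]
        have h2 := norm_tsum_le_tsum_norm (f := fun k => τ k - t M k)
          (by simpa [Real.norm_eq_abs] using hsm')
        rw [Real.norm_eq_abs] at h2
        calc |∑' k, (τ k - t M k)| ≤ ∑' k, ‖τ k - t M k‖ := h2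
          _ = ∑' k, |t M k - τ k| := by
              refine tsum_congr fun k => ?_
              rw [Real.norm_eq_abs, abs_sub_comm]
          _ ≤ ε := hle
      by_contra hne
      have hpos : 0 < |(∑' k, τ k) - 1| := abs_pos.mpr (sub_ne_zero.mpr hne)
      have := key (|(∑' k, τ k) - 1| / 2) (by linarith)
      linarith
    have hτ1 : HasSum τ 1 := hτts ▸ hτsum.hasSum
    have hTτ : Tendsto useq atTop (𝓝 (T τ)) := by
      rw [Metric.tendsto_atTop]
      intro ε hε
      obtain ⟨M, hM⟩ := hl1' (ε / 8) (by linarith)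
      refine ⟨M, fun m hm => ?_⟩
      obtain ⟨hsm, hle⟩ := hM m hm
      have hΔsum : Summable (fun k => t m k - τ k) := hsm.of_abs
      have h2 : ‖useq m - T τ‖ ≤ 2 * ∑' k, |t m k - τ k| := by
        rw [← hTt m]
        rw [show T (t m) - T τ = ∑' k, (t m k - τ k) • v k from hTsub _ _ (htsum m) hτsum]
        exact hup0 _ hΔsum
      rw [dist_eq_norm]
      calc ‖useq m - T τ‖ ≤ 2 * ∑' k, |t m k - τ k| := h2
        _ ≤ 2 * (ε / 8) := by linarith
        _ < ε := by linarith
    have huτ : u = T τ := tendsto_nhds_unique hlim hTτ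
    exact ⟨τ, ⟨hτ0, hτ1⟩, huτ.symm⟩
  · -- bounded
    refine isBounded_iff_forall_norm_le.2 ⟨2, ?_⟩
    rintro u ⟨s, ⟨hs0, hs1⟩, rfl⟩
    have h1 : ‖T s‖ ≤ 2 * ∑' k, |s k| := hup0 _ hs1.summable
    have h2 : ∑' k, |s k| = 1 := by
      rw [show (fun k => |s k|) = s from funext fun k => abs_of_nonneg (hs0 k)]
      exact hs1.tsum_eq
    rw [h2] at h1
    linarith
  · -- convex
    rintro u ⟨s, ⟨hs0, hs1⟩, rfl⟩ w ⟨r, ⟨hr0, hr1⟩, rfl⟩ a b ha hb hab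
    refine ⟨fun k => a * s k + b * r k, ⟨fun k => add_nonneg (mul_nonneg ha (hs0 k))
      (mul_nonneg hb (hr0 k)), ?_⟩, ?_⟩
    · have := (hs1.mul_left a).add (hr1.mul_left b)
      simpa [hab] using this
    · have hsum1 : Summable (fun k => a • (s k • v k)) :=
        (hvsum hs1.summable).const_smul a
      have hsum2 : Summable (fun k => b • (r k • v k)) :=
        (hvsum hr1.summable).const_smul b
      have h1 : T (fun k => a * s k + b * r k)
          = ∑' k, (a • (s k • v k) + b • (r k • v k)) := by
        refine tsum_congr fun k => ?_
        rw [add_smul, mul_smul, mul_smul]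
      rw [h1, Summable.tsum_add hsum1 hsum2, Summable.tsum_const_smul a (hvsum hs1.summable),
        Summable.tsum_const_smul b (hvsum hr1.summable)]
  · -- maps to
    rintro u ⟨s, hsS, rfl⟩
    rw [hfval s hsS]
    exact ⟨shiftSeq s, hshiftS s hsS, rfl⟩
  · -- contractive
    intro u hu w hw hne
    obtain ⟨s, hsS, rfl⟩ := (hmemC u).mp hu
    obtain ⟨r, hrS, rfl⟩ := (hmemC w).mp hw
    rw [hfval s hsS, hfval r hrS]
    have hsr : s ≠ r := fun h => hne (by rw [h])
    exact hcontr s r hsS.2.summable hrS.2.summable hsr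
  · -- no fixed point
    intro u hu
    obtain ⟨s, hsS, rfl⟩ := (hmemC u).mp hu
    rw [hfval s hsS]
    intro heq
    have h1 : shiftSeq s = s :=
      huniq _ _ (hshift_summable hsS.2.summable) hsS.2.summable heq
    have hall : ∀ k, s k = 0 := by
      intro k
      induction k with
      | zero => exact (congrFun h1 0).symm
      | succ k ih => rw [← congrFun h1 (k + 1), shiftSeq_succ, ih]
    have h2 : HasSum s 1 := hsS.2
    rw [show s = fun _ => (0 : ℝ) from funext hall] at h2
    exact one_ne_zero (h2.unique hasSum_zero)

end AuxFPP
theorem stmt9 {X : Type*} [NormedAddCommGroup X] [NormedSpace ℝ X] [CompleteSpace X] (x : ℕ → X) (h : SpansL1Asymptotically x) :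
    FailsFPP X := by
  classical
  obtain ⟨δ, hδ01, hδ0, hest⟩ := h
  -- extract a subsequence with very small δ
  have hev : ∀ k : ℕ, ∀ᶠ j in atTop, δ j ≤ (2 : ℝ)⁻¹ ^ (k + 4) :=
    fun k => hδ0.eventually (eventually_le_nhds (by positivity))
  obtain ⟨n, hnmono, hδn⟩ := Filter.extraction_forall_of_eventually hev
  -- the vectors have norm at most 1
  have hx1 : ∀ j, ‖x j‖ ≤ 1 := by
    intro j
    have h2 := (hest (j + 1) (fun m => if m = j then 1 else 0)).2
    have e1 : ∑ m ∈ Finset.range (j + 1), (if m = j then (1:ℝ) else 0) • x m = x j := by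
      simp [ite_smul]
    have e2 : ∑ m ∈ Finset.range (j + 1), |if m = j then (1:ℝ) else 0| = 1 := by
      simp [apply_ite abs]
    rwa [e1, e2] at h2
  -- transfer the lower estimate to the subsequence
  have htrans : ∀ (K : ℕ) (γ : ℕ → ℝ),
      ∑ k ∈ Finset.range K, (1 - δ (n k)) * |γ k| ≤ ‖∑ k ∈ Finset.range K, γ k • x (n k)‖ := by
    intro K γ
    set α : ℕ → ℝ := fun j => ∑ k ∈ (Finset.range K).filter (fun k => n k = j), γ k with hα
    have himg : ((Finset.range K).image n) ⊆ Finset.range (n K) := by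
      intro j hj
      obtain ⟨k, hk, rfl⟩ := Finset.mem_image.mp hj
      exact Finset.mem_range.mpr (hnmono (Finset.mem_range.mp hk))
    have hαn : ∀ k ∈ Finset.range K, α (n k) = γ k := by
      intro k hk
      have hfil : (Finset.range K).filter (fun k' => n k' = n k) = {k} := by
        ext k'
        simp only [Finset.mem_filter, Finset.mem_range, Finset.mem_singleton,
          hnmono.injective.eq_iff]
        exact ⟨fun h => h.2, fun h => ⟨h ▸ Finset.mem_range.mp hk, h⟩⟩
      rw [hα]
      simp only [hfil, Finset.sum_singleton]
    have hα0 : ∀ j, j ∉ (Finset.range K).image n → α j = 0 := by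
      intro j hj
      have hfil : (Finset.range K).filter (fun k => n k = j) = ∅ := by
        rw [Finset.filter_eq_empty_iff]
        exact fun k hk hkj => hj (Finset.mem_image.mpr ⟨k, hk, hkj⟩)
      rw [hα]
      simp only [hfil, Finset.sum_empty]
    have hinj : ∀ a ∈ Finset.range K, ∀ b ∈ Finset.range K, n a = n b → a = b :=
      fun a _ b _ hab => hnmono.injective hab
    have hsum1 : ∑ j ∈ Finset.range (n K), α j • x j
        = ∑ k ∈ Finset.range K, γ k • x (n k) := by
      rw [← Finset.sum_subset himg (fun j _ hnj => by rw [hα0 j hnj, zero_smul]),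
        Finset.sum_image hinj]
      exact Finset.sum_congr rfl fun k hk => by rw [hαn k hk]
    have hsum2 : ∑ j ∈ Finset.range (n K), (1 - δ j) * |α j|
        = ∑ k ∈ Finset.range K, (1 - δ (n k)) * |γ k| := by
      rw [← Finset.sum_subset himg (fun j _ hnj => by rw [hα0 j hnj, abs_zero, mul_zero]),
        Finset.sum_image hinj]
      exact Finset.sum_congr rfl fun k hk => by rw [hαn k hk]
    calc ∑ k ∈ Finset.range K, (1 - δ (n k)) * |γ k|
        = ∑ j ∈ Finset.range (n K), (1 - δ j) * |α j| := hsum2.symm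
      _ ≤ ‖∑ j ∈ Finset.range (n K), α j • x j‖ := (hest (n K) α).1
      _ = ‖∑ k ∈ Finset.range K, γ k • x (n k)‖ := by rw [hsum1]
  -- the weights
  set b : ℕ → ℝ := fun k => 1 + (2 : ℝ)⁻¹ ^ (k + 1) with hb
  have hbk : ∀ m, b m = 1 + (2 : ℝ)⁻¹ ^ (m + 1) := fun m => rfl
  have hpow_pos : ∀ k : ℕ, (0 : ℝ) < (2 : ℝ)⁻¹ ^ k := fun k => by positivity
  have hpow_le : ∀ k : ℕ, (2 : ℝ)⁻¹ ^ k ≤ 1 :=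
    fun k => pow_le_one₀ (by norm_num) (by norm_num)
  have hb_pos : ∀ k, (0 : ℝ) < b k := fun k => by
    have := hpow_pos (k + 1); rw [hbk]; linarith
  have hδn0 : ∀ k, 0 ≤ δ (n k) := fun k => (hδ01 (n k)).1
  have hkey : ∀ k : ℕ, (2 : ℝ)⁻¹ ^ (k + 1) = (2 : ℝ)⁻¹ ^ k * 2⁻¹ := fun k => pow_succ _ _
  have hkey4 : ∀ k : ℕ, (2 : ℝ)⁻¹ ^ (k + 4) = (2 : ℝ)⁻¹ ^ k * (2 : ℝ)⁻¹ ^ 4 := fun k =>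
    pow_add _ _ _
  -- apply the abstract lemma
  apply failsFPP_of_estimates (fun k => b k • x (n k))
    (fun k => (1 - δ (n k)) * b k) (fun k => b k)
  · -- 1 ≤ c k
    intro k
    have h1 := hδn k
    have h2 := hδn0 k
    have h3 := hpow_pos k
    have h4 := hpow_le k
    rw [hbk]
    rw [hkey4] at h1
    rw [hkey]
    nlinarith
  · -- c k ≤ 2
    intro k
    have h2 := hδn0 k
    have h3 := hpow_pos (k + 1)
    have h4 := hpow_le (k + 1)
    have h5 := hb_pos k
    rw [hbk]
    nlinarith
  · -- 0 ≤ B k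
    intro k
    exact (hb_pos k).le
  · -- B k ≤ 2
    intro k
    have h3 := hpow_pos (k + 1)
    have h4 := hpow_le (k + 1)
    rw [hbk]
    linarith
  · -- B (k+1) < c k
    intro k
    have h1 := hδn k
    have h2 := hδn0 k
    have h3 := hpow_pos k
    have h4 := hpow_le k
    rw [hbk, hbk]
    rw [hkey4] at h1
    have e1 : (2 : ℝ)⁻¹ ^ (k + 1 + 1) = (2 : ℝ)⁻¹ ^ k * 2⁻¹ * 2⁻¹ := by
      rw [pow_succ, hkey]
    rw [e1, hkey]
    nlinarith
  · -- norm bound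
    intro k
    rw [norm_smul, Real.norm_eq_abs, abs_of_pos (hb_pos k)]
    calc b k * ‖x (n k)‖ ≤ b k * 1 :=
          mul_le_mul_of_nonneg_left (hx1 (n k)) (hb_pos k).le
      _ = b k := mul_one _
  · -- lower estimate
    intro K β
    have e2 : ∑ k ∈ Finset.range K, β k • b k • x (n k)
        = ∑ k ∈ Finset.range K, (β k * b k) • x (n k) :=
      Finset.sum_congr rfl fun k _ => smul_smul _ _ _
    have e3 : ∀ k, (1 - δ (n k)) * b k * |β k| = (1 - δ (n k)) * |β k * b k| := by
      intro k
      rw [abs_mul, abs_of_pos (hb_pos k)]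
      ring
    calc ∑ k ∈ Finset.range K, (1 - δ (n k)) * b k * |β k|
        = ∑ k ∈ Finset.range K, (1 - δ (n k)) * |β k * b k| :=
          Finset.sum_congr rfl fun k _ => e3 k
      _ ≤ ‖∑ k ∈ Finset.range K, (β k * b k) • x (n k)‖ := htrans K _
      _ = ‖∑ k ∈ Finset.range K, β k • b k • x (n k)‖ := by rw [e2]
end

section
/- If X is a Banach space that is not reflexive and X is M-embedded, then X''' decomposes as the ℓ¹-direct sum X' ⊕₁ X^⊥, i.e., ‖φ‖ = ‖φ|restricted-part ∈ X'‖ + ‖φ − that part‖ for the corresponding L-projection, and consequently X'''' = X^{⊥⊥} ⊕_∞ X'^⊥, and X'^⊥ contains a norm-one element. -/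
open NormedSpace Filter Topology

set_option maxHeartbeats 1600000 in
theorem stmt17 {X : Type*} [NormedAddCommGroup X] [NormedSpace ℝ X] [CompleteSpace X] (hX : IsMEmbedded X)
    (hnr : ¬ Function.Surjective (inclusionInDoubleDual ℝ X)) :
    (∃ P : Dual ℝ (Dual ℝ (Dual ℝ X)) →L[ℝ] Dual ℝ (Dual ℝ (Dual ℝ X)),
      (∀ φ, P (P φ) = P φ) ∧ (∀ φ, ‖φ‖ = ‖P φ‖ + ‖φ - P φ‖) ∧
      Set.range P = Set.range (inclusionInDoubleDual ℝ (Dual ℝ X)) ∧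
      Set.range (ContinuousLinearMap.id ℝ (Dual ℝ (Dual ℝ (Dual ℝ X))) - P) =
        {φ : Dual ℝ (Dual ℝ (Dual ℝ X)) | ∀ x : X, φ (inclusionInDoubleDual ℝ X x) = 0}) ∧
    (∃ Q : Dual ℝ (Dual ℝ (Dual ℝ (Dual ℝ X))) →L[ℝ] Dual ℝ (Dual ℝ (Dual ℝ (Dual ℝ X))),
      (∀ ψ, Q (Q ψ) = Q ψ) ∧ (∀ ψ, ‖ψ‖ = max ‖Q ψ‖ ‖ψ - Q ψ‖) ∧
      Set.range Q =
        {ψ : Dual ℝ (Dual ℝ (Dual ℝ (Dual ℝ X))) |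
          ∀ φ : Dual ℝ (Dual ℝ (Dual ℝ X)),
            (∀ x : X, φ (inclusionInDoubleDual ℝ X x) = 0) → ψ φ = 0} ∧
      Set.range (ContinuousLinearMap.id ℝ (Dual ℝ (Dual ℝ (Dual ℝ (Dual ℝ X)))) - Q) =
        {ψ : Dual ℝ (Dual ℝ (Dual ℝ (Dual ℝ X))) |
          ∀ f : Dual ℝ X, ψ (inclusionInDoubleDual ℝ (Dual ℝ X) f) = 0}) ∧
    ∃ ψ : Dual ℝ (Dual ℝ (Dual ℝ (Dual ℝ X))),
      (∀ f : Dual ℝ X, ψ (inclusionInDoubleDual ℝ (Dual ℝ X) f) = 0) ∧ ‖ψ‖ = 1 := by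
  classical
  obtain ⟨π, hidem, hL, hrange⟩ := hX
  set ι := inclusionInDoubleDual ℝ X with hι
  set j := inclusionInDoubleDual ℝ (Dual ℝ X) with hj
  have hmem : ∀ χ : Dual ℝ (Dual ℝ (Dual ℝ X)),
      χ ∈ Set.range π ↔ ∀ x : X, χ (ι x) = 0 := by
    intro χ; rw [hrange]; exact Iff.rfl
  have hπid : ∀ χ, (∀ x : X, χ (ι x) = 0) → π χ = χ := by
    intro χ hχ
    obtain ⟨φ, hφ⟩ := (hmem χ).2 hχ
    rw [← hφ, hidem]
  have hπmem : ∀ φ (x : X), (π φ) (ι x) = 0 := fun φ x => (hmem (π φ)).1 ⟨φ, rfl⟩ x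
  have hπle : ∀ φ, ‖π φ‖ ≤ ‖φ‖ := fun φ => by
    have := hL φ; have := norm_nonneg (φ - π φ); linarith
  have hPle : ∀ φ, ‖φ - π φ‖ ≤ ‖φ‖ := fun φ => by
    have := hL φ; have := norm_nonneg (π φ); linarith
  have hcompnorm : ∀ φ : Dual ℝ (Dual ℝ (Dual ℝ X)), ‖φ.comp ι‖ ≤ ‖φ - π φ‖ := by
    intro φ
    have heq : φ.comp ι = (φ - π φ).comp ι := by
      ext x
      simp [hπmem φ x]
    rw [heq]
    refine ContinuousLinearMap.opNorm_le_bound _ (norm_nonneg _) (fun x => ?_)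
    calc ‖(φ - π φ).comp ι x‖ ≤ ‖φ - π φ‖ * ‖ι x‖ := (φ - π φ).le_opNorm _
      _ ≤ ‖φ - π φ‖ * ‖x‖ :=
          mul_le_mul_of_nonneg_left (double_dual_bound ℝ X x) (norm_nonneg _)
  have hjcomp : ∀ g : Dual ℝ X, (j g).comp ι = g := by
    intro g; ext x
    simp [hj, hι, dual_def]
  have hjnorm : ∀ g : Dual ℝ X, ‖j g‖ = ‖g‖ := fun g =>
    (inclusionInDoubleDualLi ℝ (E := Dual ℝ X)).norm_map g
  have hπj : ∀ g : Dual ℝ X, π (j g) = 0 := by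
    intro g
    have h1 : ‖(j g).comp ι‖ = ‖g‖ := by rw [hjcomp]
    have h2 := hcompnorm (j g)
    have h3 := hL (j g)
    have h4 := hjnorm g
    have h5 : ‖π (j g)‖ ≤ 0 := by linarith
    ext ξ
    have h6 : ‖(π (j g)) ξ‖ ≤ ‖π (j g)‖ * ‖ξ‖ := (π (j g)).le_opNorm ξ
    have h7 : ‖(π (j g)) ξ‖ ≤ 0 := le_trans h6 (by nlinarith [norm_nonneg ξ])
    simpa using norm_le_zero_iff.1 h7
  have hPeq : ∀ φ, φ - π φ = j (φ.comp ι) := by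
    intro φ
    have hker : ∀ x : X, (φ - j (φ.comp ι)) (ι x) = 0 := by
      intro x
      simp only [ContinuousLinearMap.sub_apply, hj, hι, dual_def,
        ContinuousLinearMap.comp_apply, sub_self]
    have h1 : π (φ - j (φ.comp ι)) = φ - j (φ.comp ι) := hπid _ hker
    have h2 : π φ = φ - j (φ.comp ι) := by
      rw [← h1, map_sub, hπj, sub_zero]
    rw [h2, sub_sub_cancel]
  -- the L-projection on the triple dual with range the image of the dual
  have part1 : ∃ P : Dual ℝ (Dual ℝ (Dual ℝ X)) →L[ℝ] Dual ℝ (Dual ℝ (Dual ℝ X)),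
      (∀ φ, P (P φ) = P φ) ∧ (∀ φ, ‖φ‖ = ‖P φ‖ + ‖φ - P φ‖) ∧
      Set.range P = Set.range (inclusionInDoubleDual ℝ (Dual ℝ X)) ∧
      Set.range (ContinuousLinearMap.id ℝ (Dual ℝ (Dual ℝ (Dual ℝ X))) - P) =
        {φ : Dual ℝ (Dual ℝ (Dual ℝ X)) | ∀ x : X, φ (inclusionInDoubleDual ℝ X x) = 0} := by
    refine ⟨ContinuousLinearMap.id ℝ _ - π, ?_, ?_, ?_, ?_⟩
    · intro φ
      simp only [ContinuousLinearMap.sub_apply, ContinuousLinearMap.id_apply, map_sub, hidem,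
        sub_self, sub_zero]
    · intro φ
      have h1 : φ - (ContinuousLinearMap.id ℝ (Dual ℝ (Dual ℝ (Dual ℝ X))) - π) φ = π φ := by
        simp only [ContinuousLinearMap.sub_apply, ContinuousLinearMap.id_apply]
        abel
      rw [h1]
      simp only [ContinuousLinearMap.sub_apply, ContinuousLinearMap.id_apply]
      have := hL φ; linarith
    · ext χ
      constructor
      · rintro ⟨φ, rfl⟩
        exact ⟨φ.comp ι, by simp only [ContinuousLinearMap.sub_apply,
          ContinuousLinearMap.id_apply]; rw [← hPeq]⟩
      · rintro ⟨g, rfl⟩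
        refine ⟨j g, ?_⟩
        simp only [ContinuousLinearMap.sub_apply, ContinuousLinearMap.id_apply, hπj, sub_zero]
        rfl
    · have hID : ContinuousLinearMap.id ℝ (Dual ℝ (Dual ℝ (Dual ℝ X))) -
          (ContinuousLinearMap.id ℝ (Dual ℝ (Dual ℝ (Dual ℝ X))) - π) = π := sub_sub_cancel _ _
      rw [hID, hrange]
  -- the M-projection on the fourth dual
  set Q : Dual ℝ (Dual ℝ (Dual ℝ (Dual ℝ X))) →L[ℝ] Dual ℝ (Dual ℝ (Dual ℝ (Dual ℝ X))) :=
    (ContinuousLinearMap.compL ℝ (Dual ℝ (Dual ℝ (Dual ℝ X))) (Dual ℝ (Dual ℝ (Dual ℝ X))) ℝ).flip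
      (ContinuousLinearMap.id ℝ (Dual ℝ (Dual ℝ (Dual ℝ X))) - π) with hQ
  have hQapp : ∀ ψ φ, Q ψ φ = ψ (φ - π φ) := by
    intro ψ φ
    simp only [hQ, ContinuousLinearMap.flip_apply, ContinuousLinearMap.compL_apply,
      ContinuousLinearMap.comp_apply, ContinuousLinearMap.sub_apply,
      ContinuousLinearMap.id_apply]
  have hQsub : ∀ ψ φ, (ψ - Q ψ) φ = ψ (π φ) := by
    intro ψ φ
    rw [ContinuousLinearMap.sub_apply, hQapp, map_sub]
    ring
  have hπP : ∀ φ, π (φ - π φ) = 0 := by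
    intro φ; rw [map_sub, hidem, sub_self]
  have part2 : ∃ Q' : Dual ℝ (Dual ℝ (Dual ℝ (Dual ℝ X))) →L[ℝ]
      Dual ℝ (Dual ℝ (Dual ℝ (Dual ℝ X))),
      (∀ ψ, Q' (Q' ψ) = Q' ψ) ∧ (∀ ψ, ‖ψ‖ = max ‖Q' ψ‖ ‖ψ - Q' ψ‖) ∧
      Set.range Q' =
        {ψ : Dual ℝ (Dual ℝ (Dual ℝ (Dual ℝ X))) |
          ∀ φ : Dual ℝ (Dual ℝ (Dual ℝ X)),
            (∀ x : X, φ (inclusionInDoubleDual ℝ X x) = 0) → ψ φ = 0} ∧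
      Set.range (ContinuousLinearMap.id ℝ (Dual ℝ (Dual ℝ (Dual ℝ (Dual ℝ X)))) - Q') =
        {ψ : Dual ℝ (Dual ℝ (Dual ℝ (Dual ℝ X))) |
          ∀ f : Dual ℝ X, ψ (inclusionInDoubleDual ℝ (Dual ℝ X) f) = 0} := by
    refine ⟨Q, ?_, ?_, ?_, ?_⟩
    · intro ψ
      ext φ
      rw [hQapp, hQapp, hQapp, hπP, sub_zero]
    · intro ψ
      apply le_antisymm
      · apply ContinuousLinearMap.opNorm_le_bound _ (le_max_of_le_left (norm_nonneg _))
        intro φ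
        have e1 : ψ φ = Q ψ (φ - π φ) + (ψ - Q ψ) (π φ) := by
          rw [hQapp, hQsub, hπP, sub_zero, hidem, ← map_add]
          congr 1
          abel
        calc ‖ψ φ‖ ≤ ‖Q ψ (φ - π φ)‖ + ‖(ψ - Q ψ) (π φ)‖ := by
              rw [e1]; exact norm_add_le _ _
          _ ≤ ‖Q ψ‖ * ‖φ - π φ‖ + ‖ψ - Q ψ‖ * ‖π φ‖ :=
              add_le_add ((Q ψ).le_opNorm _) ((ψ - Q ψ).le_opNorm _)
          _ ≤ max ‖Q ψ‖ ‖ψ - Q ψ‖ * ‖φ - π φ‖ + max ‖Q ψ‖ ‖ψ - Q ψ‖ * ‖π φ‖ :=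
              add_le_add (mul_le_mul_of_nonneg_right (le_max_left _ _) (norm_nonneg _))
                (mul_le_mul_of_nonneg_right (le_max_right _ _) (norm_nonneg _))
          _ = max ‖Q ψ‖ ‖ψ - Q ψ‖ * (‖φ - π φ‖ + ‖π φ‖) := by ring
          _ = max ‖Q ψ‖ ‖ψ - Q ψ‖ * ‖φ‖ := by rw [hL φ]; ring_nf
      · apply max_le
        · apply ContinuousLinearMap.opNorm_le_bound _ (norm_nonneg ψ)
          intro φ
          rw [hQapp]
          calc ‖ψ (φ - π φ)‖ ≤ ‖ψ‖ * ‖φ - π φ‖ := ψ.le_opNorm _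
            _ ≤ ‖ψ‖ * ‖φ‖ := mul_le_mul_of_nonneg_left (hPle φ) (norm_nonneg _)
        · apply ContinuousLinearMap.opNorm_le_bound _ (norm_nonneg ψ)
          intro φ
          rw [hQsub]
          calc ‖ψ (π φ)‖ ≤ ‖ψ‖ * ‖π φ‖ := ψ.le_opNorm _
            _ ≤ ‖ψ‖ * ‖φ‖ := mul_le_mul_of_nonneg_left (hπle φ) (norm_nonneg _)
    · ext ψ
      constructor
      · rintro ⟨ψ₀, rfl⟩
        intro φ hφ
        rw [hQapp, hπid φ hφ, sub_self, map_zero]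
      · intro hψ
        refine ⟨ψ, ?_⟩
        ext φ
        rw [hQapp, map_sub, hψ (π φ) (hπmem φ), sub_zero]
    · ext ψ
      constructor
      · rintro ⟨ψ₀, rfl⟩
        intro f
        simp only [ContinuousLinearMap.sub_apply, ContinuousLinearMap.id_apply, ← hj]
        have h := hQsub ψ₀ (j f)
        rw [ContinuousLinearMap.sub_apply] at h
        rw [h, hπj, map_zero]
      · intro hψ
        refine ⟨ψ, ?_⟩
        ext φ
        simp only [ContinuousLinearMap.sub_apply, ContinuousLinearMap.id_apply]
        have h := hQsub ψ φ
        rw [ContinuousLinearMap.sub_apply] at h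
        have hP0 : ψ (φ - π φ) = 0 := by rw [hPeq φ]; exact hψ _
        have e : ψ (π φ) = ψ φ - ψ (φ - π φ) := by rw [map_sub]; ring
        rw [h, e, hP0, sub_zero]
  -- a norm-one element of the annihilator of the dual
  have part3 : ∃ ψ : Dual ℝ (Dual ℝ (Dual ℝ (Dual ℝ X))),
      (∀ f : Dual ℝ X, ψ (inclusionInDoubleDual ℝ (Dual ℝ X) f) = 0) ∧ ‖ψ‖ = 1 := by
    simp only [Function.Surjective, not_forall] at hnr
    obtain ⟨ξ, hξ⟩ := hnr
    have hclosed : IsClosed (Set.range ι) := by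
      have hiso : Isometry ι := (inclusionInDoubleDualLi ℝ (E := X)).isometry
      exact hiso.isClosedEmbedding.isClosed_range
    have hconvex : Convex ℝ (Set.range ι) := by
      rintro a ⟨x, rfl⟩ b ⟨y, rfl⟩ p q hp hq hpq
      exact ⟨p • x + q • y, by simp⟩
    have hξ' : ξ ∉ Set.range ι := by
      rintro ⟨x, hx⟩; exact hξ ⟨x, hx⟩
    obtain ⟨f, u, hfu, huξ⟩ := geometric_hahn_banach_closed_point hconvex hclosed hξ'
    have hu0 : 0 < u := by
      have := hfu (ι 0) ⟨0, rfl⟩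
      simpa using this
    have hfX : ∀ x : X, f (ι x) = 0 := by
      intro x
      by_contra hx
      have h1 : f (ι (((u + 1) / f (ι x)) • x)) < u := hfu _ ⟨_, rfl⟩
      rw [map_smul, map_smul] at h1
      rw [smul_eq_mul, div_mul_cancel₀ _ hx] at h1
      linarith
    have hf0 : f ≠ 0 := by
      intro h
      rw [h] at huξ
      simp at huξ
      linarith
    letI i3 : NormedAddCommGroup (Dual ℝ (Dual ℝ (Dual ℝ X))) :=
      ContinuousLinearMap.toNormedAddCommGroup (E := Dual ℝ (Dual ℝ X)) (F := ℝ)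
    obtain ⟨ψ₀, hψ₀norm, hψ₀f⟩ := @exists_dual_vector ℝ _ (Dual ℝ (Dual ℝ (Dual ℝ X))) i3.toSeminormedAddCommGroup
      (ContinuousLinearMap.toNormedSpace) f (norm_ne_zero_iff.2 hf0)
    have hψ₀f' : ψ₀ f = ‖f‖ := by exact_mod_cast hψ₀f
    refine ⟨ψ₀.comp π, ?_, ?_⟩
    · intro g
      simp only [ContinuousLinearMap.comp_apply]
      rw [hπj, map_zero]
    · have hfnorm : 0 < ‖f‖ := norm_pos_iff.2 hf0
      apply le_antisymm
      · apply ContinuousLinearMap.opNorm_le_bound _ zero_le_one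
        intro χ
        calc ‖(ψ₀.comp π) χ‖ = ‖ψ₀ (π χ)‖ := rfl
          _ ≤ ‖ψ₀‖ * ‖π χ‖ := ψ₀.le_opNorm _
          _ ≤ 1 * ‖χ‖ := by
              rw [hψ₀norm]; exact mul_le_mul_of_nonneg_left (hπle χ) zero_le_one
      · have hπf : π f = f := hπid f hfX
        have happ : (ψ₀.comp π) f = ‖f‖ := by
          simp only [ContinuousLinearMap.comp_apply, hπf, hψ₀f']
        have hle := (ψ₀.comp π).le_opNorm f
        rw [happ, norm_norm] at hle
        exact le_of_mul_le_mul_right (by rw [one_mul]; exact hle) hfnorm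
  exact ⟨part1, part2, part3⟩
end
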